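/- Let G be geometric Brownian motion G(t) = exp(√c·B(t) − ct/2), and for n ∈ ℕ consider the event A_n that max_{0 ≤ m ≤ n−1} |G((m+1)/n)/G(m/n) − 1| ≤ ζ_n. If (ζ_n) satisfies ζ_n → 0 and liminf n·ζ_n²/log n > 16c, then for all sufficiently large n, P(A_n) ≥ (1 − 1/n²)^n, and hence P(A_n) → 1 as n → ∞. -/

import Mathlib

open MeasureTheory ProbabilityTheory Real Filter Set
open scoped NNReal ENNReal

lemma tail_Ioi {v : ℝ≥0} (hv : v ≠ 0) {a : ℝ} (ha : 0 < a) :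
    ∫ x in Set.Ioi a, gaussianPDFReal 0 v x
      ≤ (Real.sqrt (2 * π * v))⁻¹ * ((2 * v / a) * Real.exp (-a ^ 2 / (2 * v))) := by
  have hv0 : (0:ℝ) < v := lt_of_le_of_ne v.coe_nonneg (by exact_mod_cast (Ne.symm hv))
  have hb : (0:ℝ) < a / (2 * v) := by positivity
  have hint2 : IntegrableOn (fun x => (Real.sqrt (2 * π * v))⁻¹ * Real.exp (-(a/(2*(v:ℝ))) * x))
      (Set.Ioi a) := (exp_neg_integrableOn_Ioi a hb).const_mul _
  have hle : ∫ x in Set.Ioi a, gaussianPDFReal 0 v x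
      ≤ ∫ x in Set.Ioi a, (Real.sqrt (2 * π * v))⁻¹ * Real.exp (-(a/(2*(v:ℝ))) * x) := by
    refine setIntegral_mono_on (integrable_gaussianPDFReal 0 v).integrableOn hint2
      measurableSet_Ioi ?_
    intro x hx
    simp only [gaussianPDFReal, sub_zero]
    have hsq : (0:ℝ) ≤ (Real.sqrt (2 * π * v))⁻¹ := by positivity
    refine mul_le_mul_of_nonneg_left ?_ hsq
    apply Real.exp_le_exp.mpr
    have hx' : a < x := hx
    have key : a * x ≤ x^2 := by nlinarith
    have h2v : (0:ℝ) < 2*(v:ℝ) := by positivity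
    calc -x^2/(2*(v:ℝ)) ≤ (-(a*x))/(2*(v:ℝ)) := by
          apply (div_le_div_iff_of_pos_right h2v).mpr; linarith
      _ = -(a/(2*(v:ℝ))) * x := by ring
  have hval : ∫ x in Set.Ioi a, Real.exp (-(a/(2*(v:ℝ))) * x)
      = (2*(v:ℝ)/a) * Real.exp (-a^2/(2*(v:ℝ))) := by
    have h := integral_comp_mul_left_Ioi (fun y => Real.exp (-y)) a hb
    simp only [smul_eq_mul] at h
    have : (∫ x in Set.Ioi a, Real.exp (-(a/(2*(v:ℝ)) * x))) =
        (a/(2*(v:ℝ)))⁻¹ * ∫ x in Set.Ioi (a/(2*(v:ℝ)) * a), Real.exp (-x) := h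
    rw [show (fun x => Real.exp (-(a/(2*(v:ℝ))) * x)) = fun x => Real.exp (-(a/(2*(v:ℝ)) * x)) by
      funext x; ring_nf]
    rw [this, integral_exp_neg_Ioi]
    rw [inv_div]
    congr 1
    field_simp
  calc ∫ x in Set.Ioi a, gaussianPDFReal 0 v x
      ≤ ∫ x in Set.Ioi a, (Real.sqrt (2 * π * v))⁻¹ * Real.exp (-(a/(2*(v:ℝ))) * x) := hle
    _ = (Real.sqrt (2 * π * v))⁻¹ * ∫ x in Set.Ioi a, Real.exp (-(a/(2*(v:ℝ))) * x) := by
        rw [integral_const_mul]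
    _ = (Real.sqrt (2 * π * v))⁻¹ * ((2 * v / a) * Real.exp (-a ^ 2 / (2 * v))) := by
        rw [hval]

lemma gauss_pdf_even (v : ℝ≥0) (x : ℝ) :
    gaussianPDFReal 0 v (-x) = gaussianPDFReal 0 v x := by
  simp [gaussianPDFReal, neg_sq]

lemma gauss_abs_le {v : ℝ≥0} (hv : v ≠ 0) {a : ℝ} (ha : 0 < a) {r : ℝ}
    (hr : 2 * ((Real.sqrt (2 * π * v))⁻¹ * ((2 * v / a) * Real.exp (-a ^ 2 / (2 * v)))) ≤ r) :
    ENNReal.ofReal (1 - r) ≤ gaussianReal 0 v {x : ℝ | |x| ≤ a} := by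
  have hv0 : (0:ℝ) < v := lt_of_le_of_ne v.coe_nonneg (by exact_mod_cast (Ne.symm hv))
  set T : Set ℝ := {x : ℝ | a < |x|} with hT
  have hTdef : T = Set.Iio (-a) ∪ Set.Ioi a := by
    ext x
    simp only [hT, Set.mem_setOf_eq, Set.mem_union, Set.mem_Iio, Set.mem_Ioi, lt_abs, lt_neg]
    tauto
  have hTmeas : MeasurableSet T := by
    rw [hTdef]; exact measurableSet_Iio.union measurableSet_Ioi
  have hsym : ∫ x in Set.Iio (-a), gaussianPDFReal 0 v x
      = ∫ x in Set.Ioi a, gaussianPDFReal 0 v x := by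
    rw [setIntegral_congr_set Iio_ae_eq_Iic]
    rw [show (∫ x in Set.Iic (-a), gaussianPDFReal 0 v x)
        = ∫ x in Set.Iic (-a), gaussianPDFReal 0 v (-x) from
      setIntegral_congr_fun measurableSet_Iic fun x _ => (gauss_pdf_even v x).symm]
    rw [integral_comp_neg_Iic, neg_neg]
  have hintT : ∫ x in T, gaussianPDFReal 0 v x
      = 2 * ∫ x in Set.Ioi a, gaussianPDFReal 0 v x := by
    rw [hTdef, setIntegral_union (by
        refine Set.disjoint_left.mpr fun x hx hx' => ?_
        simp only [Set.mem_Iio, Set.mem_Ioi] at hx hx'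
        linarith) measurableSet_Ioi
      (integrable_gaussianPDFReal 0 v).integrableOn
      (integrable_gaussianPDFReal 0 v).integrableOn, hsym]
    ring
  have htail : gaussianReal 0 v T ≤ ENNReal.ofReal r := by
    rw [gaussianReal_apply_eq_integral 0 hv T]
    apply ENNReal.ofReal_le_ofReal
    rw [hintT]
    calc 2 * ∫ x in Set.Ioi a, gaussianPDFReal 0 v x
        ≤ 2 * ((Real.sqrt (2 * π * v))⁻¹ * ((2 * v / a) * Real.exp (-a ^ 2 / (2 * v)))) := by
          linarith [tail_Ioi hv ha]
      _ ≤ r := hr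
  have hcompl : {x : ℝ | |x| ≤ a} = Tᶜ := by
    ext x; simp [hT, not_lt]
  rw [hcompl, prob_compl_eq_one_sub hTmeas]
  have h0r : 0 ≤ r := le_trans (by positivity) hr
  calc ENNReal.ofReal (1 - r) = ENNReal.ofReal 1 - ENNReal.ofReal r := ENNReal.ofReal_sub _ h0r
    _ = 1 - ENNReal.ofReal r := by rw [ENNReal.ofReal_one]
    _ ≤ 1 - gaussianReal 0 v T := tsub_le_tsub_left htail 1

set_option maxHeartbeats 2000000 in
theorem stmt9 {Ω : Type*} {mΩ : MeasurableSpace Ω} (μ : Measure Ω) [IsProbabilityMeasure μ]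
    (B : ℝ → Ω → ℝ) (c : ℝ) (hc : 0 < c)
    (hmeas : ∀ t, Measurable (B t)) (hB0 : ∀ ω, B 0 ω = 0)
    (hincr_law : ∀ s t : ℝ, 0 ≤ s → s ≤ t →
      Measure.map (fun ω => B t ω - B s ω) μ = gaussianReal 0 (Real.toNNReal (t - s)))
    (hincr_indep : ∀ (k : ℕ) (t : ℕ → ℝ), StrictMono t →
      iIndepFun
        (fun i : Fin k => fun ω => B (t (i + 1)) ω - B (t i) ω) μ)
    (G : ℝ → Ω → ℝ) (hG : ∀ t ω, G t ω = Real.exp (Real.sqrt c * B t ω - c * t / 2))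
    (ζ : ℕ → ℝ) (hζpos : ∀ n, 0 < ζ n)
    (hζ0 : Tendsto ζ atTop (nhds 0))
    (hliminf : 16 * c < Filter.atTop.liminf (fun n : ℕ => n * (ζ n)^2 / Real.log n))
    (A : ℕ → Set Ω)
    (hA : ∀ n : ℕ, A n = {ω | ∀ m : ℕ, m < n →
      |G (((m : ℝ) + 1) / n) ω / G ((m : ℝ) / n) ω - 1| ≤ ζ n}) :
    (∀ᶠ n : ℕ in atTop, ENNReal.ofReal ((1 - 1 / (n : ℝ)^2)^n) ≤ μ (A n)) ∧
      Tendsto (fun n => μ (A n)) atTop (nhds 1) := by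
  have hsc : (0:ℝ) < Real.sqrt c := Real.sqrt_pos.mpr hc
  -- eventual facts
  have hbddbelow : IsBoundedUnder (· ≥ ·) atTop (fun n : ℕ => n * (ζ n)^2 / Real.log n) := by
    refine isBoundedUnder_of ⟨0, fun n => ?_⟩
    exact div_nonneg (by positivity) (Real.log_natCast_nonneg n)
  have hE2 : ∀ᶠ n : ℕ in atTop, 16 * c < n * (ζ n)^2 / Real.log n :=
    eventually_lt_of_lt_liminf hliminf hbddbelow
  have hhalf : ∀ᶠ n : ℕ in atTop, ζ n ≤ 1/2 :=
    hζ0.eventually (eventually_le_nhds (by norm_num : (0:ℝ) < 1/2))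
  have hbound : ∀ᶠ n : ℕ in atTop, ENNReal.ofReal ((1 - 1 / (n : ℝ)^2)^n) ≤ μ (A n) := by
    filter_upwards [eventually_ge_atTop 2, hE2, hhalf] with n hn2 hlim hζh
    -- basic per-n facts
    have hn0 : (0:ℝ) < n := by positivity
    have hn1 : (1:ℝ) < n := by exact_mod_cast lt_of_lt_of_le one_lt_two hn2
    have hlogpos : 0 < Real.log n := Real.log_pos hn1
    have hE2' : 16 * c * Real.log n < n * ζ n ^ 2 := (lt_div_iff₀ hlogpos).mp hlim
    have hlog2 : (0.6931471803:ℝ) < Real.log n := by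
      refine lt_of_lt_of_le Real.log_two_gt_d9 (Real.log_le_log (by norm_num) ?_)
      exact_mod_cast hn2
    set z := ζ n with hz
    have hzpos : 0 < z := hζpos n
    have hnz : 3 * c ≤ (n:ℝ) * z := by
      nlinarith [hE2', hlog2, hzpos, hζh, hc, mul_pos hn0 hzpos,
        mul_nonneg (le_of_lt (mul_pos hn0 hzpos)) (by linarith : (0:ℝ) ≤ 1/2 - z)]
    set a := z / (2 * Real.sqrt c) with hadef
    have ha : 0 < a := by rw [hadef]; positivity
    have ha2 : a ^ 2 = z ^ 2 / (4 * c) := by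
      rw [hadef, div_pow, mul_pow, Real.sq_sqrt hc.le]; ring_nf
    have hsca : Real.sqrt c * a = z / 2 := by
      rw [hadef]; field_simp
    set v := Real.toNNReal (1 / (n:ℝ)) with hvdef
    have hvco : (v:ℝ) = 1 / (n:ℝ) := Real.coe_toNNReal _ (by positivity)
    have hvne : v ≠ 0 := by
      rw [hvdef]; exact ne_of_gt (Real.toNNReal_pos.mpr (by positivity))
    have hπ := Real.pi_gt_three
    -- the per-increment Gaussian bound
    have hkey : 2 * ((Real.sqrt (2 * π * v))⁻¹ * ((2 * v / a) * Real.exp (-a ^ 2 / (2 * v))))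
        ≤ 1 / (n:ℝ) ^ 2 := by
      have hS : 0 < Real.sqrt (2 * π * (v:ℝ)) :=
        Real.sqrt_pos.mpr (by rw [hvco]; positivity)
      have hE : Real.exp (-a ^ 2 / (2 * (v:ℝ))) ≤ 1 / (n:ℝ) ^ 2 := by
        have heq : a ^ 2 / (2 * (v:ℝ)) = (n:ℝ) * z ^ 2 / (8 * c) := by
          rw [ha2, hvco]; field_simp; ring
        have h1 : 2 * Real.log n ≤ a ^ 2 / (2 * (v:ℝ)) := by
          rw [heq, le_div_iff₀ (by positivity : (0:ℝ) < 8 * c)]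
          nlinarith [hE2']
        have hexpn : Real.exp (2 * Real.log n) = (n:ℝ) ^ 2 := by
          rw [two_mul, Real.exp_add, Real.exp_log hn0]; ring
        calc Real.exp (-a ^ 2 / (2 * (v:ℝ))) ≤ Real.exp (-(2 * Real.log n)) := by
              apply Real.exp_le_exp.mpr
              rw [neg_div]
              linarith
          _ = 1 / (n:ℝ) ^ 2 := by rw [Real.exp_neg, hexpn, one_div]
      have h32 : 32 * c ≤ π * ((n:ℝ) * z ^ 2) := by
        nlinarith [hE2', hlog2, hπ, hc, mul_pos hn0 (pow_pos hzpos 2),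
          mul_nonneg (by linarith : (0:ℝ) ≤ π - 3) (le_of_lt (mul_pos hn0 (pow_pos hzpos 2)))]
      have hsq : (4 * (v:ℝ)) ^ 2 ≤ (a * Real.sqrt (2 * π * (v:ℝ))) ^ 2 := by
        have hrhs : (a * Real.sqrt (2 * π * (v:ℝ))) ^ 2 = a ^ 2 * (2 * π * (v:ℝ)) := by
          rw [mul_pow, Real.sq_sqrt (by rw [hvco]; positivity : (0:ℝ) ≤ 2 * π * (v:ℝ))]
        rw [hrhs, ha2, hvco]
        rw [show (4 * ((1:ℝ) / (n:ℝ))) ^ 2 = 16 / (n:ℝ) ^ 2 by field_simp; ring,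
          show z ^ 2 / (4 * c) * (2 * π * ((1:ℝ) / (n:ℝ))) = (2 * π * z ^ 2) / (4 * c * (n:ℝ)) by
            field_simp,
          div_le_div_iff₀ (by positivity) (by positivity)]
        nlinarith [mul_le_mul_of_nonneg_left h32 (by positivity : (0:ℝ) ≤ 2 * (n:ℝ))]
      have hsqrt : 4 * (v:ℝ) ≤ a * Real.sqrt (2 * π * (v:ℝ)) := by
        have h := Real.sqrt_le_sqrt hsq
        rwa [Real.sqrt_sq (by positivity), Real.sqrt_sq (by positivity)] at h
      have hpre : 4 * (v:ℝ) / (a * Real.sqrt (2 * π * (v:ℝ))) ≤ 1 := by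
        rw [div_le_one (by positivity)]; exact hsqrt
      calc 2 * ((Real.sqrt (2 * π * v))⁻¹ * ((2 * v / a) * Real.exp (-a ^ 2 / (2 * v))))
          = (4 * (v:ℝ) / (a * Real.sqrt (2 * π * (v:ℝ)))) * Real.exp (-a ^ 2 / (2 * (v:ℝ))) := by
            ring
        _ ≤ 1 * (1 / (n:ℝ) ^ 2) := mul_le_mul hpre hE (Real.exp_nonneg _) one_pos.le
        _ = 1 / (n:ℝ) ^ 2 := one_mul _
    have hGauss : ENNReal.ofReal (1 - 1 / (n:ℝ) ^ 2) ≤ gaussianReal 0 v {x : ℝ | |x| ≤ a} :=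
      gauss_abs_le hvne ha hkey
    -- independence and law
    have hIcc : {x : ℝ | |x| ≤ a} = Set.Icc (-a) a := by
      ext x; simp [abs_le]
    have hst : StrictMono (fun k : ℕ => (k:ℝ) / n) := by
      intro i j hij
      have hij' : (i:ℝ) < j := by exact_mod_cast hij
      exact (div_lt_div_iff_of_pos_right hn0).mpr hij'
    have hInd := hincr_indep n (fun k : ℕ => (k:ℝ) / n) hst
    have happly := hInd.measure_inter_preimage_eq_mul (S := Finset.univ)
      (sets := fun _ => Set.Icc (-a) a) (fun i _ => measurableSet_Icc)
    have hlawgen : ∀ s u : ℝ, 0 ≤ s → s ≤ u → u - s = 1 / (n:ℝ) →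
        μ ((fun ω => B u ω - B s ω) ⁻¹' Set.Icc (-a) a)
          = gaussianReal 0 v (Set.Icc (-a) a) := by
      intro s u hs hsu hdiff
      rw [← Measure.map_apply (f := fun ω => B u ω - B s ω) ((hmeas u).sub (hmeas s)) measurableSet_Icc,
        hincr_law s u hs hsu, hdiff, hvdef]
    have hlaweach : ∀ i ∈ (Finset.univ : Finset (Fin n)),
        μ ((fun ω => B ((((i:ℕ) + 1 : ℕ) : ℝ) / n) ω - B (((i:ℕ) : ℝ) / n) ω) ⁻¹'
            Set.Icc (-a) a)
          = gaussianReal 0 v (Set.Icc (-a) a) := by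
      intro i _
      refine hlawgen _ _ (by positivity) ?_ ?_
      · have := hst (Nat.lt_succ_self (i:ℕ))
        exact le_of_lt this
      · push_cast
        field_simp
        ring
    rw [Finset.prod_congr rfl hlaweach, Finset.prod_const, Finset.card_univ,
      Fintype.card_fin] at happly
    -- the intersection is contained in A n
    have hsub : (⋂ i ∈ (Finset.univ : Finset (Fin n)),
        (fun ω => B ((((i:ℕ) + 1 : ℕ) : ℝ) / n) ω - B (((i:ℕ) : ℝ) / n) ω) ⁻¹'
          Set.Icc (-a) a) ⊆ A n := by
      intro ω hω
      have hω' : ∀ i : Fin n,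
          B ((((i:ℕ) + 1 : ℕ) : ℝ) / n) ω - B (((i:ℕ) : ℝ) / n) ω ∈ Set.Icc (-a) a := by
        intro i
        have h1 := Set.mem_iInter.mp hω i
        exact Set.mem_iInter.mp h1 (Finset.mem_univ i)
      rw [hA n]
      intro m hm
      have hXm : B (((m + 1 : ℕ) : ℝ) / n) ω - B (((m : ℕ) : ℝ) / n) ω ∈ Set.Icc (-a) a :=
        hω' ⟨m, hm⟩
      push_cast at hXm
      simp only [Set.mem_Icc] at hXm
      obtain ⟨hX1, hX2⟩ := hXm
      set X := B (((m:ℝ) + 1) / n) ω - B ((m:ℝ) / n) ω with hXdef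
      have hratio : G (((m:ℝ) + 1) / n) ω / G ((m:ℝ) / n) ω
          = Real.exp (Real.sqrt c * X - c / (2 * (n:ℝ))) := by
        rw [hG, hG, ← Real.exp_sub]
        congr 1
        rw [hXdef]
        field_simp
        ring
      have h1z : (0:ℝ) < 1 + z := by linarith
      have hL : z / 2 + c / (2 * (n:ℝ)) ≤ Real.log (1 + z) := by
        have hlb : z / (1 + z) ≤ Real.log (1 + z) := by
          have hll := Real.log_le_sub_one_of_pos (inv_pos.mpr h1z)
          rw [Real.log_inv] at hll
          have h3 : z / (1 + z) = 1 - (1 + z)⁻¹ := by field_simp; ring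
          linarith [h3]
        have h23 : 2 * z / 3 ≤ z / (1 + z) := by
          rw [div_le_div_iff₀ (by norm_num) h1z]
          nlinarith [hzpos, hζh]
        have hc6 : c / (2 * (n:ℝ)) ≤ z / 6 := by
          rw [div_le_div_iff₀ (by positivity) (by norm_num)]
          linarith [hnz]
        linarith
      have hy1 : Real.sqrt c * X - c / (2 * (n:ℝ)) ≤ Real.log (1 + z) := by
        have hup : Real.sqrt c * X ≤ z / 2 := by
          calc Real.sqrt c * X ≤ Real.sqrt c * a := mul_le_mul_of_nonneg_left hX2 hsc.le
            _ = z / 2 := hsca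
        have hcn : 0 < c / (2 * (n:ℝ)) := by positivity
        linarith
      have hy2 : -(Real.log (1 + z)) ≤ Real.sqrt c * X - c / (2 * (n:ℝ)) := by
        have hlo : -(z / 2) ≤ Real.sqrt c * X := by
          have h := mul_le_mul_of_nonneg_left hX1 hsc.le
          rw [mul_neg, hsca] at h
          linarith
        linarith
      rw [hratio, abs_le]
      constructor
      · have hmono : Real.exp (-(Real.log (1 + z)))
            ≤ Real.exp (Real.sqrt c * X - c / (2 * (n:ℝ))) := Real.exp_le_exp.mpr hy2
        rw [Real.exp_neg, Real.exp_log h1z] at hmono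
        have h2 : 1 - z ≤ (1 + z)⁻¹ := by
          rw [inv_eq_one_div, le_div_iff₀ h1z]
          nlinarith [sq_nonneg z]
        linarith
      · have hmono : Real.exp (Real.sqrt c * X - c / (2 * (n:ℝ)))
            ≤ Real.exp (Real.log (1 + z)) := Real.exp_le_exp.mpr hy1
        rw [Real.exp_log h1z] at hmono
        linarith
    -- assemble
    have h1n : (0:ℝ) ≤ 1 - 1 / (n:ℝ) ^ 2 := by
      have : 1 / (n:ℝ) ^ 2 ≤ 1 := by
        rw [div_le_one (by positivity)]
        nlinarith [hn1]
      linarith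
    have hGpow : ENNReal.ofReal ((1 - 1 / (n:ℝ) ^ 2) ^ n)
        ≤ gaussianReal 0 v (Set.Icc (-a) a) ^ n := by
      rw [ENNReal.ofReal_pow h1n n]
      refine pow_le_pow_left' ?_ n
      rw [← hIcc]
      exact hGauss
    exact le_trans (le_trans hGpow (le_of_eq happly.symm)) (measure_mono hsub)

  refine ⟨hbound, ?_⟩
  have hle1 : ∀ᶠ n : ℕ in atTop, ENNReal.ofReal (1 - 1/(n:ℝ)) ≤ μ (A n) := by
    filter_upwards [hbound, eventually_ge_atTop 1] with n hb hn1
    refine le_trans (ENNReal.ofReal_le_ofReal ?_) hb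
    have hn0 : (0:ℝ) < n := by exact_mod_cast hn1
    have h2 : (-2:ℝ) ≤ -(1/(n:ℝ)^2) := by
      have : 1/(n:ℝ)^2 ≤ 1 := by
        rw [div_le_one (by positivity)]
        nlinarith [hn0, (by exact_mod_cast hn1 : (1:ℝ) ≤ n)]
      linarith
    have := one_add_mul_le_pow h2 n
    have heq : 1 + (n:ℝ) * -(1/(n:ℝ)^2) = 1 - 1/(n:ℝ) := by field_simp; ring
    have heq2 : (1:ℝ) + -(1/(n:ℝ)^2) = 1 - 1/(n:ℝ)^2 := by ring
    rw [heq, heq2] at this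
    exact this
  have hlim1 : Tendsto (fun n : ℕ => ENNReal.ofReal (1 - 1/(n:ℝ))) atTop (nhds 1) := by
    have : Tendsto (fun n : ℕ => 1 - 1/(n:ℝ)) atTop (nhds 1) := by
      have : Tendsto (fun n : ℕ => 1 / (n:ℝ)) atTop (nhds 0) := tendsto_one_div_atTop_nhds_zero_nat
      simpa using tendsto_const_nhds.sub this
    have := ENNReal.tendsto_ofReal (a := 1) this
    simpa using this
  refine tendsto_of_tendsto_of_tendsto_of_le_of_le' hlim1 tendsto_const_nhds hle1 ?_
  exact Eventually.of_forall fun n => prob_le_one
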